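/- Let X be a compact Hausdorff space and ∗ a continuous t-norm. A functional I : C(X,[0,1]) → [0,1] satisfies (1) I(1_X) = 1, (2) I(φ ∨ ψ) = I(φ) ∨ I(ψ) for all comonotone φ, ψ, and (3) I(c ∗ φ) = c ∗ I(φ) for all c ∈ [0,1], if and only if there exists a unique upper-semicontinuous normed capacity ν on X such that I(φ) = max{ν(φ⁻¹([t,1])) ∗ t : t ∈ [0,1]} for all φ ∈ C(X,[0,1]). In particular, monotonicity of I need not be assumed. -/

import Mathlib

open unitInterval

noncomputable section

/-- Two `[0,1]`-valued functions are comonotone. -/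
def Comonotone {X : Type*} (f g : X → I) : Prop :=
  ∀ x y : X, 0 ≤ ((f x : ℝ) - (f y : ℝ)) * ((g x : ℝ) - (g y : ℝ))
/-- Pointwise max of a constant with a continuous `[0,1]`-valued map. -/
def cSup {X : Type*} [TopologicalSpace X] (c : I) (f : C(X, I)) : C(X, I) :=
  ⟨fun x => c ⊔ f x, continuous_const.max f.continuous⟩

/-- Pointwise min of a constant with a continuous `[0,1]`-valued map. -/
def cInf {X : Type*} [TopologicalSpace X] (c : I) (f : C(X, I)) : C(X, I) :=
  ⟨fun x => c ⊓ f x, continuous_const.min f.continuous⟩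

/-- Pointwise product of a constant with a continuous `[0,1]`-valued map. -/
def cMul {X : Type*} [TopologicalSpace X] (c : I) (f : C(X, I)) : C(X, I) :=
  ⟨fun x => c * f x,
    Continuous.subtype_mk (continuous_const.mul (continuous_subtype_val.comp f.continuous)) _⟩

/-- Pointwise max of two continuous `[0,1]`-valued maps. -/
def fSup {X : Type*} [TopologicalSpace X] (f g : C(X, I)) : C(X, I) :=
  ⟨fun x => f x ⊔ g x, f.continuous.max g.continuous⟩
/-- A continuous t-norm on `[0,1]`. -/
structure Tnorm where
  op : I → I → I
  cont : Continuous fun p : I × I => op p.1 p.2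
  assoc : ∀ a b c, op (op a b) c = op a (op b c)
  comm : ∀ a b, op a b = op b a
  mono : ∀ ⦃a b c d⦄, a ≤ b → c ≤ d → op a c ≤ op b d
  op_one : ∀ s, op s 1 = s
/-- The map `x ↦ c ∗ f x` for a t-norm `∗`. -/
def tMul {X : Type*} [TopologicalSpace X] (T : Tnorm) (c : I) (f : C(X, I)) : C(X, I) :=
  ⟨fun x => T.op c (f x), T.cont.comp (continuous_const.prodMk f.continuous)⟩
/-- An upper-semicontinuous normed capacity on a topological space,
defined on the closed subsets. -/
structure Capacity (X : Type*) [TopologicalSpace X] where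
  ν : {F : Set X // IsClosed F} → I
  normed : ν ⟨Set.univ, isClosed_univ⟩ = 1
  empty : ν ⟨∅, isClosed_empty⟩ = 0
  mono : ∀ F G : {F : Set X // IsClosed F}, F.1 ⊆ G.1 → ν F ≤ ν G
  usc : ∀ (F : {F : Set X // IsClosed F}) (a : I), ν F < a →
    ∃ O : Set X, IsOpen O ∧ F.1 ⊆ O ∧
      ∀ B : {F : Set X // IsClosed F}, IsCompact B.1 → B.1 ⊆ O → ν B < a

/-- The (closed) superlevel set `φ⁻¹([t,1])` of a continuous `[0,1]`-valued map. -/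
def superLevel {X : Type*} [TopologicalSpace X] (f : C(X, I)) (t : I) :
    {F : Set X // IsClosed F} :=
  ⟨{x | t ≤ f x}, isClosed_le continuous_const f.continuous⟩

lemma coeI_one : ((1:I):ℝ) = 1 := rfl
lemma coeI_zero : ((0:I):ℝ) = 0 := rfl

lemma Tnorm.one_op (T : Tnorm) (s : I) : T.op 1 s = s := by rw [T.comm]; exact T.op_one s
lemma Tnorm.op_le_left (T : Tnorm) (a b : I) : T.op a b ≤ a := by
  have := T.mono (le_refl a) (le_one' : b ≤ 1)
  simpa [T.op_one] using this
lemma Tnorm.op_le_right (T : Tnorm) (a b : I) : T.op a b ≤ b := by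
  rw [T.comm]; exact Tnorm.op_le_left T b a
lemma Tnorm.op_zero (T : Tnorm) (a : I) : T.op a 0 = 0 :=
  le_antisymm (Tnorm.op_le_right T a 0) nonneg'
lemma Tnorm.zero_op (T : Tnorm) (a : I) : T.op 0 a = 0 := by
  rw [T.comm]; exact Tnorm.op_zero T a
lemma Tnorm.contL (T : Tnorm) (c : I) : Continuous fun s => T.op c s :=
  T.cont.comp (continuous_const.prodMk continuous_id)
lemma Tnorm.contR (T : Tnorm) (c : I) : Continuous fun s => T.op s c :=
  T.cont.comp (continuous_id.prodMk continuous_const)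
lemma Tnorm.uc (T : Tnorm) : UniformContinuous fun p : I × I => T.op p.1 p.2 :=
  CompactSpace.uniformContinuous_of_continuous T.cont

/-- For every `ε > 0` there is `c < 1` with `y - T.op c y ≤ ε` for all `y`. -/
lemma Tnorm.exists_c (T : Tnorm) {ε : ℝ} (hε : 0 < ε) :
    ∃ c : I, (c : ℝ) < 1 ∧ ∀ y : I, (y : ℝ) - (T.op c y : ℝ) ≤ ε := by
  obtain ⟨δ, hδ, hd⟩ := Metric.uniformContinuous_iff.1 T.uc ε hε
  have h1 : 0 < min δ 1 := lt_min hδ one_pos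
  have h2 : min δ 1 ≤ 1 := min_le_right _ _
  set c : I := ⟨1 - min δ 1 / 2, by constructor <;> nlinarith⟩ with hc
  have hclt : (c : ℝ) < 1 := by
    simp only [hc]
    nlinarith
  refine ⟨c, hclt, fun y => ?_⟩
  have hdist : dist ((c, y) : I × I) ((1 : I), y) < δ := by
    rw [Prod.dist_eq]
    have h2 : min δ 1 ≤ δ := min_le_left _ _
    have : dist c (1 : I) < δ := by
      rw [Subtype.dist_eq]
      simp only [hc, coeI_one]
      rw [Real.dist_eq]
      rw [abs_of_nonpos (by nlinarith)]
      nlinarith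
    exact max_lt this (by simpa using hδ)
  have h1 : dist (T.op c y) (T.op 1 y) < ε := hd hdist
  rw [T.one_op] at h1
  rw [Subtype.dist_eq, Real.dist_eq] at h1
  have := abs_lt.1 h1
  linarith [this.2]


-- cl : clamp ℝ → I
def cl (r : ℝ) : I := Set.projIcc 0 1 zero_le_one r
lemma cl_mono : Monotone cl := Set.monotone_projIcc zero_le_one
lemma cl_cont : Continuous cl := continuous_projIcc (h := zero_le_one)
lemma cl_coe (r : ℝ) : (cl r : ℝ) = max 0 (min 1 r) := rfl
lemma cl_of_mem {r : ℝ} (h0 : 0 ≤ r) (h1 : r ≤ 1) : (cl r : ℝ) = r := by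
  rw [cl_coe, min_eq_right h1, max_eq_right h0]
lemma cl_one_of {r : ℝ} (h : 1 ≤ r) : cl r = 1 := by
  apply Subtype.ext; rw [cl_coe, min_eq_left h]; simp
lemma cl_zero_of {r : ℝ} (h : r ≤ 0) : cl r = 0 := by
  apply Subtype.ext; rw [cl_coe, min_comm, max_min_distrib_left]
  simp [max_eq_left h]
lemma le_cl {s : I} {r : ℝ} (h : (s:ℝ) ≤ r) : s ≤ cl r := by
  have h2 : cl (s:ℝ) = s := Subtype.ext (cl_of_mem s.2.1 s.2.2)
  calc s = cl (s:ℝ) := h2.symm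
  _ ≤ cl r := cl_mono h
lemma cl_le {s : I} {r : ℝ} (h : r ≤ (s:ℝ)) : cl r ≤ s := by
  have h2 : cl (s:ℝ) = s := Subtype.ext (cl_of_mem s.2.1 s.2.2)
  calc cl r ≤ cl (s:ℝ) := cl_mono h
  _ = s := h2
lemma cl_add_le (x d : ℝ) (hd : 0 ≤ d) : (cl (x + d) : ℝ) ≤ (cl x : ℝ) + d := by
  rw [cl_coe, cl_coe]
  rcases le_total 1 x with h | h <;> rcases le_total 1 (x+d) with h' | h' <;>
    rcases le_total 0 x with h0 | h0 <;> rcases le_total 0 (x+d) with h0' | h0' <;>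
    simp [min_eq_left, min_eq_right, max_eq_left, max_eq_right, *] <;> linarith

-- comonotonicity
lemma comonotone_comp {X : Type*} (φ : X → I) {m k : I → I} (hm : Monotone m) (hk : Monotone k) :
    Comonotone (fun x => m (φ x)) (fun x => k (φ x)) := by
  intro x y
  rcases le_total (φ x) (φ y) with h | h
  · have h1 : (m (φ x) : ℝ) ≤ m (φ y) := Subtype.coe_le_coe.2 (hm h)
    have h2 : (k (φ x) : ℝ) ≤ k (φ y) := Subtype.coe_le_coe.2 (hk h)
    nlinarith
  · exact mul_nonneg (by simpa using Subtype.coe_le_coe.2 (hm h))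
      (by simpa using Subtype.coe_le_coe.2 (hk h))

/-- composition of a continuous selfmap of `I` with a `C(X,I)`. -/
def mcomp {X : Type*} [TopologicalSpace X] (m : I → I) (hc : Continuous m) (φ : C(X, I)) :
    C(X, I) := ⟨fun x => m (φ x), hc.comp φ.continuous⟩

section Jlemmas
variable {X : Type*} [TopologicalSpace X] {T : Tnorm} {J : C(X, I) → I}

lemma J_le_comono (hM : ∀ φ ψ : C(X, I), Comonotone (⇑φ) (⇑ψ) → J (fSup φ ψ) = J φ ⊔ J ψ)
    {φ ψ : C(X, I)} (hc : Comonotone ⇑φ ⇑ψ) (hle : ∀ x, φ x ≤ ψ x) : J φ ≤ J ψ := by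
  have h1 : fSup φ ψ = ψ := ContinuousMap.ext fun x => sup_eq_right.2 (hle x)
  have := hM φ ψ hc
  rw [h1] at this
  rw [this]; exact le_sup_left

lemma J_const (hN : J (ContinuousMap.const X 1) = 1)
    (hH : ∀ (c : I) (φ : C(X, I)), J (tMul T c φ) = T.op c (J φ)) (c : I) :
    J (ContinuousMap.const X c) = c := by
  have h1 : ContinuousMap.const X c = tMul T c (ContinuousMap.const X 1) :=
    ContinuousMap.ext fun x => (T.op_one c).symm
  rw [h1, hH, hN, T.op_one]

end Jlemmas

section Nuc
variable {X : Type*} [TopologicalSpace X] {T : Tnorm}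

/-- Canonical candidate capacity: `ν F = inf {J u : u ≡ 1 on F}`. -/
def nuSet (J : C(X, I) → I) (F : Set X) : Set ℝ :=
  {r | ∃ u : C(X, I), (∀ x ∈ F, u x = 1) ∧ r = (J u : ℝ)}

lemma nuSet_nonempty (J : C(X, I) → I) (F : Set X) : (nuSet J F).Nonempty :=
  ⟨(J (ContinuousMap.const X 1) : ℝ), ContinuousMap.const X 1, fun _ _ => rfl, rfl⟩

lemma nuSet_bdd (J : C(X, I) → I) (F : Set X) : BddBelow (nuSet J F) :=
  ⟨0, by rintro r ⟨u, hu, rfl⟩; exact (J u).2.1⟩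

def nuc (J : C(X, I) → I) (F : Set X) : I :=
  ⟨sInf (nuSet J F),
   le_csInf (nuSet_nonempty J F) (by rintro r ⟨u, hu, rfl⟩; exact (J u).2.1),
   csInf_le_of_le (nuSet_bdd J F) ⟨ContinuousMap.const X 1, fun _ _ => rfl, rfl⟩
     (J (ContinuousMap.const X 1)).2.2⟩

variable {J : C(X, I) → I}

lemma nuc_le {F : Set X} {u : C(X, I)} (hu : ∀ x ∈ F, u x = 1) : nuc J F ≤ J u :=
  Subtype.coe_le_coe.1 (csInf_le (nuSet_bdd J F) ⟨u, hu, rfl⟩)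

lemma le_nuc {F : Set X} {a : I} (h : ∀ u : C(X, I), (∀ x ∈ F, u x = 1) → a ≤ J u) :
    a ≤ nuc J F :=
  Subtype.coe_le_coe.1 (le_csInf (nuSet_nonempty J F)
    (by rintro r ⟨u, hu, rfl⟩; exact Subtype.coe_le_coe.2 (h u hu)))

lemma nuc_mono {F G : Set X} (h : F ⊆ G) : nuc J F ≤ nuc J G :=
  le_nuc fun u hu => nuc_le fun x hx => hu x (h hx)

variable (hN : J (ContinuousMap.const X 1) = 1)
  (hM : ∀ φ ψ : C(X, I), Comonotone (⇑φ) (⇑ψ) → J (fSup φ ψ) = J φ ⊔ J ψ)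
  (hH : ∀ (c : I) (φ : C(X, I)), J (tMul T c φ) = T.op c (J φ))

include hM hH in
/-- Key lower bound: every `T.op (ν {φ ≥ t}) t` is below `J φ`. -/
lemma lower_bound (φ : C(X, I)) (t : I) : T.op (nuc J {x | t ≤ φ x}) t ≤ J φ := by
  have step1 : ∀ c : I, (c : ℝ) < (t : ℝ) → T.op (nuc J {x | t ≤ φ x}) c ≤ J φ := by
    intro c hc
    set d : ℝ := (t : ℝ) - c with hdd
    have hct : (c:ℝ) ≤ t := hc.le
    have hd : 0 < d := by rw [hdd]; linarith
    set k : I → I := fun s => cl (((s : ℝ) - c) / d) with hk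
    have hkm : Monotone k := by
      intro x y hxy
      exact cl_mono (by have := Subtype.coe_le_coe.2 hxy; gcongr)
    have hkc : Continuous k :=
      cl_cont.comp ((continuous_subtype_val.sub continuous_const).div_const d)
    set u : C(X, I) := mcomp k hkc φ with hu'
    have hu : ∀ x ∈ {x | t ≤ φ x}, u x = 1 := by
      intro x hx
      have hx' : (t : ℝ) ≤ (φ x : ℝ) := Subtype.coe_le_coe.2 hx
      exact cl_one_of ((le_div_iff₀ hd).2 (by linarith))
    set v : C(X, I) := tMul T c u with hv'
    have hvle : ∀ x, v x ≤ φ x := by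
      intro x
      rcases le_total ((φ x : ℝ)) ((c : ℝ)) with h | h
      · have h0 : k (φ x) = 0 := cl_zero_of (div_nonpos_of_nonpos_of_nonneg (by linarith) hd.le)
        show T.op c (k (φ x)) ≤ φ x
        rw [h0, T.op_zero]; exact nonneg'
      · exact (T.op_le_left c _).trans (Subtype.coe_le_coe.1 h)
    have hcom : Comonotone ⇑φ ⇑v :=
      comonotone_comp (⇑φ) monotone_id (fun x y hxy => T.mono (le_refl c) (hkm hxy))
    have h1 : fSup φ v = φ := ContinuousMap.ext fun x => sup_eq_left.2 (hvle x)
    have h2 := hM φ v hcom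
    rw [h1] at h2
    have h3 : J v ≤ J φ := le_sup_right.trans h2.ge
    have h4 : J v = T.op c (J u) := hH c u
    calc T.op (nuc J {x | t ≤ φ x}) c = T.op c (nuc J {x | t ≤ φ x}) := T.comm _ _
    _ ≤ T.op c (J u) := T.mono (le_refl c) (nuc_le hu)
    _ = J v := h4.symm
    _ ≤ J φ := h3
  rcases eq_or_lt_of_le (nonneg' : (0 : I) ≤ t) with h0 | h0
  · rw [← h0, T.op_zero]; exact nonneg'
  · set c : ℕ → I := fun n => cl ((t : ℝ) - 1 / (n + 1)) with hc
    have hlt : ∀ n, ((c n : ℝ)) < (t : ℝ) := by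
      intro n
      have hn : (0:ℝ) < 1 / (n + 1) := by positivity
      have ht0 : (0:ℝ) < t := h0
      rw [cl_coe]
      apply max_lt ht0 (lt_of_le_of_lt (min_le_right _ _) (by linarith))
    have htend : Filter.Tendsto c Filter.atTop (nhds t) := by
      have h1 : Filter.Tendsto (fun n : ℕ => (t : ℝ) - 1 / (n + 1)) Filter.atTop
          (nhds ((t : ℝ) - 0)) :=
        Filter.Tendsto.sub tendsto_const_nhds tendsto_one_div_add_atTop_nhds_zero_nat
      rw [sub_zero] at h1
      have h2 : Filter.Tendsto c Filter.atTop (nhds (cl (t : ℝ))) :=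
        (cl_cont.tendsto _).comp h1
      have hclt : cl (t:ℝ) = t := Subtype.ext (cl_of_mem t.2.1 t.2.2)
      rwa [hclt] at h2
    have htend2 : Filter.Tendsto (fun n => T.op (nuc J {x | t ≤ φ x}) (c n)) Filter.atTop
        (nhds (T.op (nuc J {x | t ≤ φ x}) t)) :=
      ((T.contL _).tendsto _).comp htend
    exact le_of_tendsto htend2 (Filter.Eventually.of_forall fun n => step1 (c n) (hlt n))

include hM in
/-- If `a` vanishes outside `{φ ≥ s}` then `J a ≤ ν {φ ≥ s}`. -/
lemma J_plateau_le {φ a : C(X, I)} {s : I} (h0 : ∀ x : X, a x ≠ 0 → s ≤ φ x) :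
    J a ≤ nuc J {x | s ≤ φ x} := by
  apply le_nuc
  intro u hu
  have hle : ∀ x, a x ≤ u x := by
    intro x
    by_cases h : a x = 0
    · rw [h]; exact nonneg'
    · rw [hu x (h0 x h)]; exact le_one'
  have hcom : Comonotone ⇑a ⇑u := by
    intro x y
    rcases lt_trichotomy ((u x : ℝ)) ((u y : ℝ)) with h | h | h
    · have hx : a x = 0 := by
        by_contra hax
        have h1 : u x = 1 := hu x (h0 x hax)
        rw [h1] at h
        exact absurd h (not_lt.2 (u y).2.2)
      have h1 : (a x : ℝ) = 0 := by rw [hx]; rfl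
      nlinarith [(a y).2.1]
    · rw [h]; simp
    · have hy : a y = 0 := by
        by_contra hay
        have h1 : u y = 1 := hu y (h0 y hay)
        rw [h1] at h
        exact absurd h (not_lt.2 (u x).2.2)
      have h1 : (a y : ℝ) = 0 := by rw [hy]; rfl
      nlinarith [(a x).2.1]
  exact J_le_comono hM hcom hle

include hM hH in
/-- Upper semicontinuity of the canonical set function. -/
lemma nuc_usc {F : Set X} (a : I) (h : nuc J F < a) :
    ∃ O : Set X, IsOpen O ∧ F ⊆ O ∧ ∀ B : Set X, B ⊆ O → nuc J B < a := by
  obtain ⟨r, hrmem, hrlt⟩ := exists_lt_of_csInf_lt (nuSet_nonempty J F)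
    (show sInf (nuSet J F) < (a : ℝ) from Subtype.coe_lt_coe.2 h)
  obtain ⟨u, hu, rfl⟩ := hrmem
  set ε : ℝ := ((a : ℝ) - (J u : ℝ)) / 2 with hε'
  have hε : 0 < ε := by rw [hε']; linarith
  obtain ⟨c, hc1, hc2⟩ := T.exists_c hε
  set θ : ℝ := (1 + (c : ℝ)) / 2 with hθ'
  have hcθ : (c : ℝ) < θ := by rw [hθ']; linarith [hc1]
  have hθ1 : θ < 1 := by rw [hθ']; linarith [hc1]
  set hfun : I → I := fun s => s ⊔ cl (((s : ℝ) - c) / (θ - c)) with hhf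
  have hmono : Monotone hfun := by
    intro x y hxy
    exact sup_le_sup hxy (cl_mono (by have h9 := Subtype.coe_le_coe.2 hxy; gcongr <;> linarith))
  have hcont : Continuous hfun :=
    continuous_id.max (cl_cont.comp
      ((continuous_subtype_val.sub continuous_const).div_const _))
  set ψ : C(X, I) := mcomp hfun hcont u with hψ'
  have key1 : ∀ s : I, T.op c (hfun s) ≤ s := by
    intro s
    rcases le_total ((s : ℝ)) ((c : ℝ)) with h' | h'
    · have h0 : cl (((s : ℝ) - c) / (θ - c)) = 0 :=
        cl_zero_of (div_nonpos_of_nonpos_of_nonneg (by linarith) (by linarith))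
      have : hfun s = s := by rw [hhf]; simp [h0]
      rw [this]; exact T.op_le_right c s
    · exact (T.op_le_left c _).trans (Subtype.coe_le_coe.1 h')
  have hcomu : Comonotone ⇑u ⇑(tMul T c ψ) :=
    comonotone_comp (⇑u) monotone_id (fun x y hxy => T.mono (le_refl c) (hmono hxy))
  have h1 : fSup u (tMul T c ψ) = u := ContinuousMap.ext fun x => sup_eq_left.2 (key1 (u x))
  have h2 := hM u (tMul T c ψ) hcomu
  rw [h1] at h2
  have h3 : T.op c (J ψ) ≤ J u := by rw [← hH c ψ]; exact le_sup_right.trans h2.ge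
  have hψa : (J ψ : ℝ) < a := by
    have := hc2 (J ψ)
    have h4 : (T.op c (J ψ) : ℝ) ≤ (J u : ℝ) := Subtype.coe_le_coe.2 h3
    linarith
  refine ⟨{x | θ < (u x : ℝ)}, ?_, ?_, ?_⟩
  · exact isOpen_lt continuous_const (continuous_subtype_val.comp u.continuous)
  · intro x hx
    have : u x = 1 := hu x hx
    show θ < (u x : ℝ)
    rw [this]; exact hθ1
  · intro B hB
    have hψ1 : ∀ x ∈ B, ψ x = 1 := by
      intro x hx
      have hθx : θ < (u x : ℝ) := hB hx
      have : cl (((u x : ℝ) - c) / (θ - c)) = 1 :=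
        cl_one_of ((le_div_iff₀ (by linarith)).2 (by linarith))
      show hfun (u x) = 1
      rw [hhf]
      simp only [this]
      exact sup_eq_right.2 le_one'
    exact lt_of_le_of_lt (nuc_le hψ1) (Subtype.coe_lt_coe.1 hψa)

end Nuc

section Stair
variable (T : Tnorm)

/-- A ramp which is `0` below `(i-2)/n` and `1` above `(i-1)/n`. -/
def hstep (n i : ℕ) : I → I := fun s => cl ((n : ℝ) * ((s : ℝ) - ((i : ℝ) - 2) / n))
def slev (n i : ℕ) : I := cl (((i : ℝ) - 2) / n)
def tlev (n i : ℕ) : I := cl ((i : ℝ) / n)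

lemma hstep_mono (n i : ℕ) : Monotone (hstep n i) := by
  intro x y hxy
  have h := Subtype.coe_le_coe.2 hxy
  exact cl_mono (by have hn : (0:ℝ) ≤ n := Nat.cast_nonneg n; nlinarith)

lemma hstep_cont (n i : ℕ) : Continuous (hstep n i) :=
  cl_cont.comp (continuous_const.mul (continuous_subtype_val.sub continuous_const))

def stair (n : ℕ) : ℕ → I → I
  | 0 => fun _ => 0
  | (k+1) => fun s => stair n k s ⊔ T.op (tlev n (k+1)) (hstep n (k+1) s)

lemma stair_mono (n : ℕ) : ∀ k, Monotone (stair T n k)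
  | 0 => monotone_const
  | (k+1) => fun x y hxy =>
      sup_le_sup (stair_mono n k hxy) (T.mono (le_refl _) (hstep_mono n (k+1) hxy))

lemma stair_cont (n : ℕ) : ∀ k, Continuous (stair T n k)
  | 0 => continuous_const
  | (k+1) => (stair_cont n k).max ((T.contL _).comp (hstep_cont n (k+1)))

lemma stair_le_succ (n k : ℕ) (s : I) : stair T n k s ≤ stair T n (k+1) s := le_sup_left

lemma stair_le_stair (n : ℕ) {j k : ℕ} (h : j ≤ k) (s : I) : stair T n j s ≤ stair T n k s := by
  induction k, h using Nat.le_induction with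
  | base => exact le_refl _
  | succ k hjk ih => exact ih.trans (stair_le_succ T n k s)

lemma le_stair (n : ℕ) (hn : 0 < n) (s : I) : s ≤ stair T n n s := by
  set i : ℕ := min (n - 1) (Nat.floor ((s : ℝ) * n)) with hi
  have hsn0 : (0:ℝ) ≤ (s : ℝ) * n := mul_nonneg s.2.1 (Nat.cast_nonneg n)
  have hin : i + 1 ≤ n := by
    have : i ≤ n - 1 := min_le_left _ _
    omega
  have hile : (i : ℝ) ≤ (s : ℝ) * n := by
    have h1 : i ≤ Nat.floor ((s : ℝ) * n) := min_le_right _ _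
    calc (i : ℝ) ≤ (Nat.floor ((s : ℝ) * n) : ℝ) := Nat.cast_le.2 h1
    _ ≤ (s : ℝ) * n := Nat.floor_le hsn0
  have hlei : (s : ℝ) * n ≤ (i : ℝ) + 1 := by
    rcases le_or_gt (n - 1) (Nat.floor ((s : ℝ) * n)) with h | h
    · have hieq : i = n - 1 := min_eq_left h
      have h2 : ((i : ℝ)) + 1 = (n : ℝ) := by
        rw [hieq]
        have : (1:ℕ) ≤ n := hn
        push_cast [Nat.cast_sub this]
        ring
      rw [h2]
      calc (s : ℝ) * n ≤ 1 * n := by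
            apply mul_le_mul_of_nonneg_right s.2.2 (Nat.cast_nonneg n)
      _ = (n : ℝ) := one_mul _
    · have hieq : i = Nat.floor ((s : ℝ) * n) := min_eq_right h.le
      rw [hieq]
      exact (Nat.lt_floor_add_one _).le
  have hnR : (0:ℝ) < n := Nat.cast_pos.2 hn
  have h1 : hstep n (i+1) s = 1 := by
    apply cl_one_of
    have harg : (n : ℝ) * ((s : ℝ) - (((i+1 : ℕ) : ℝ) - 2) / n) = (s:ℝ) * n - (i : ℝ) + 1 := by
      push_cast
      field_simp
      ring
    rw [harg]
    linarith
  have h2 : s ≤ tlev n (i+1) := by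
    apply le_cl
    rw [le_div_iff₀ hnR]
    push_cast
    linarith
  calc s ≤ tlev n (i+1) := h2
  _ = T.op (tlev n (i+1)) 1 := (T.op_one _).symm
  _ = T.op (tlev n (i+1)) (hstep n (i+1) s) := by rw [h1]
  _ ≤ stair T n (i+1) s := le_sup_right
  _ ≤ stair T n n s := stair_le_stair T n hin s

end Stair

section KeyUpper
variable {X : Type*} [TopologicalSpace X] {T : Tnorm} {J : C(X, I) → I}
variable (hN : J (ContinuousMap.const X 1) = 1)
  (hM : ∀ φ ψ : C(X, I), Comonotone (⇑φ) (⇑ψ) → J (fSup φ ψ) = J φ ⊔ J ψ)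
  (hH : ∀ (c : I) (φ : C(X, I)), J (tMul T c φ) = T.op c (J φ))

include hN hM hH in
lemma J_stair (φ : C(X, I)) (n : ℕ) : ∀ k,
    J (mcomp (stair T n k) (stair_cont T n k) φ) =
      (Finset.range k).sup fun i =>
        T.op (tlev n (i+1)) (J (mcomp (hstep n (i+1)) (hstep_cont n (i+1)) φ)) := by
  intro k
  induction k with
  | zero =>
      have h1 : mcomp (stair T n 0) (stair_cont T n 0) φ = ContinuousMap.const X 0 :=
        ContinuousMap.ext fun x => rfl
      rw [h1, J_const hN hH]
      simp only [Finset.range_zero, Finset.sup_empty]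
      rfl
  | succ k ih =>
      have h1 : mcomp (stair T n (k+1)) (stair_cont T n (k+1)) φ =
          fSup (mcomp (stair T n k) (stair_cont T n k) φ)
            (tMul T (tlev n (k+1)) (mcomp (hstep n (k+1)) (hstep_cont n (k+1)) φ)) :=
        ContinuousMap.ext fun x => rfl
      have hcom : Comonotone ⇑(mcomp (stair T n k) (stair_cont T n k) φ)
          ⇑(tMul T (tlev n (k+1)) (mcomp (hstep n (k+1)) (hstep_cont n (k+1)) φ)) :=
        comonotone_comp (⇑φ) (stair_mono T n k)
          (fun x y hxy => T.mono (le_refl _) (hstep_mono n (k+1) hxy))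
      rw [h1, hM _ _ hcom, ih, hH]
      rw [Finset.range_add_one, Finset.sup_insert]
      exact sup_comm _ _

include hN hM hH in
lemma key_upper (φ : C(X, I)) (n : ℕ) (hn : 0 < n) :
    ∃ s t : I, (s : ℝ) ≤ t ∧ (t : ℝ) ≤ (s : ℝ) + 2 / n ∧
      J φ ≤ T.op (nuc J {x | s ≤ φ x}) t := by
  have hcomp : Comonotone ⇑φ ⇑(mcomp (stair T n n) (stair_cont T n n) φ) :=
    comonotone_comp (⇑φ) monotone_id (stair_mono T n n)
  have h1 : J φ ≤ J (mcomp (stair T n n) (stair_cont T n n) φ) :=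
    J_le_comono hM hcomp (fun x => le_stair T n hn (φ x))
  rw [J_stair hN hM hH φ n n] at h1
  have hne : (Finset.range n).Nonempty := ⟨0, Finset.mem_range.2 hn⟩
  obtain ⟨i, hi, hieq⟩ := Finset.exists_mem_eq_sup (Finset.range n) hne
    (fun i => T.op (tlev n (i+1)) (J (mcomp (hstep n (i+1)) (hstep_cont n (i+1)) φ)))
  rw [hieq] at h1
  have hnR : (0:ℝ) < n := Nat.cast_pos.2 hn
  have h2 : J (mcomp (hstep n (i+1)) (hstep_cont n (i+1)) φ) ≤
      nuc J {x | slev n (i+1) ≤ φ x} := by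
    apply J_plateau_le hM
    intro x hx
    have hne0 : (0:ℝ) < (n : ℝ) * ((φ x : ℝ) - (((i+1:ℕ) : ℝ) - 2) / n) := by
      by_contra hcon
      exact hx (cl_zero_of (not_lt.1 hcon))
    have hgt : (((i+1:ℕ) : ℝ) - 2) / n < (φ x : ℝ) := by
      by_contra hcon
      push_neg at hcon
      nlinarith
    show slev n (i+1) ≤ φ x
    have : ((slev n (i+1) : I) : ℝ) ≤ (φ x : ℝ) := by
      rw [slev, cl_coe]
      apply max_le (φ x).2.1
      exact (min_le_right _ _).trans hgt.le
    exact Subtype.coe_le_coe.1 this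
  refine ⟨slev n (i+1), tlev n (i+1), ?_, ?_, ?_⟩
  · rw [slev, tlev]
    apply cl_mono
    have : ((i:ℝ)+1) - 2 ≤ ((i:ℝ)+1) := by linarith
    push_cast
    gcongr
  · have heq : ((i+1:ℕ) : ℝ) / n = (((i+1:ℕ) : ℝ) - 2) / n + 2 / n := by
      field_simp
      ring
    rw [tlev, slev, heq]
    exact cl_add_le _ _ (by positivity)
  · calc J φ ≤ T.op (tlev n (i+1)) (J (mcomp (hstep n (i+1)) (hstep_cont n (i+1)) φ)) := h1
    _ ≤ T.op (tlev n (i+1)) (nuc J {x | slev n (i+1) ≤ φ x}) := T.mono (le_refl _) h2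
    _ = T.op (nuc J {x | slev n (i+1) ≤ φ x}) (tlev n (i+1)) := T.comm _ _

end KeyUpper

section Rep
variable {X : Type*} [TopologicalSpace X] [CompactSpace X] {T : Tnorm} {J : C(X, I) → I}
variable (hN : J (ContinuousMap.const X 1) = 1)
  (hM : ∀ φ ψ : C(X, I), Comonotone (⇑φ) (⇑ψ) → J (fSup φ ψ) = J φ ⊔ J ψ)
  (hH : ∀ (c : I) (φ : C(X, I)), J (tMul T c φ) = T.op c (J φ))

include hM hH in
lemma f_usc (φ : C(X, I)) :
    UpperSemicontinuous (fun t : I => T.op (nuc J {x | t ≤ φ x}) t) := by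
  intro t₀ y hy
  set v : I := nuc J {x | t₀ ≤ φ x} with hv
  have hy' : T.op v t₀ < y := hy
  rcases eq_or_lt_of_le (le_one' : v ≤ 1) with hv1 | hv1
  · -- v = 1 : then f t₀ = t₀ and f t ≤ t always
    have ht₀ : t₀ < y := by
      have h8 : T.op v t₀ = t₀ := by rw [hv1, T.one_op]
      rwa [h8] at hy'
    have hev : ∀ᶠ t in nhds t₀, t < y := Filter.Tendsto.eventually_lt_const ht₀ Filter.tendsto_id
    exact hev.mono fun t ht => lt_of_le_of_lt (T.op_le_right _ t) ht
  · -- v < 1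
    have hev : ∀ᶠ p : I × I in nhds (v, t₀), T.op p.1 p.2 < y :=
      Filter.Tendsto.eventually_lt_const hy' T.cont.continuousAt
    obtain ⟨ε, hε, hball⟩ := Metric.eventually_nhds_iff_ball.1 hev
    set m : ℝ := min (ε / 2) ((1 - (v : ℝ)) / 2) with hm'
    have hv1R : (v : ℝ) < 1 := by
      have h9 := Subtype.coe_lt_coe.2 hv1
      rwa [coeI_one] at h9
    have hm : 0 < m := lt_min (by linarith) (by linarith)
    set b : I := ⟨(v : ℝ) + m, ⟨by have := v.2.1; linarith,
      by have h1 : m ≤ (1 - (v : ℝ)) / 2 := min_le_right _ _; linarith⟩⟩ with hb'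
    have hvb : v < b := by
      apply Subtype.coe_lt_coe.1
      show (v : ℝ) < (v : ℝ) + m
      linarith
    obtain ⟨O, hO, hFO, hOB⟩ := nuc_usc hM hH b hvb
    -- find η > 0 with {x | (t₀:ℝ) - η ≤ φ x} ⊆ O
    have hη : ∃ η : ℝ, 0 < η ∧ {x : X | (t₀ : ℝ) - η ≤ (φ x : ℝ)} ⊆ O := by
      by_contra hcon
      push_neg at hcon
      set C : ℕ → Set X := fun n => {x : X | (t₀ : ℝ) - 1 / (n + 1) ≤ (φ x : ℝ)} ∩ Oᶜ with hC
      have hCcl : ∀ n, IsClosed (C n) := fun n =>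
        (isClosed_le continuous_const (continuous_subtype_val.comp φ.continuous)).inter
          hO.isClosed_compl
      have hCdec : ∀ n, C (n + 1) ⊆ C n := by
        intro n x hx
        refine ⟨?_, hx.2⟩
        have h1 : (t₀ : ℝ) - 1 / (n + 1) ≤ (t₀ : ℝ) - 1 / (n + 1 + 1) := by
          have : (1:ℝ) / (n + 1 + 1) ≤ 1 / (n + 1) := by
            apply one_div_le_one_div_of_le (by positivity) (by push_cast; linarith)
          linarith
        have := hx.1
        simp only [hC, Set.mem_setOf_eq] at this ⊢
        push_cast at this ⊢
        linarith
      have hCne : ∀ n, (C n).Nonempty := by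
        intro n
        obtain ⟨x, hx1, hx2⟩ := Set.not_subset.1 (hcon (1 / (n + 1)) (by positivity))
        exact ⟨x, hx1, hx2⟩
      obtain ⟨x, hx⟩ := IsCompact.nonempty_iInter_of_sequence_nonempty_isCompact_isClosed
        C hCdec hCne ((hCcl 0).isCompact) hCcl
      have hx1 : ∀ n : ℕ, (t₀ : ℝ) - 1 / (n + 1) ≤ (φ x : ℝ) := fun n =>
        (Set.mem_iInter.1 hx n).1
      have hx2 : x ∈ Oᶜ := (Set.mem_iInter.1 hx 0).2
      have hxF : t₀ ≤ φ x := by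
        apply Subtype.coe_le_coe.1
        by_contra hcc
        push_neg at hcc
        obtain ⟨n, hn⟩ := exists_nat_one_div_lt (show (0:ℝ) < (t₀:ℝ) - (φ x : ℝ) by linarith)
        have := hx1 n
        push_cast at hn this
        linarith
      exact hx2 (hFO hxF)
    obtain ⟨η, hη0, hηO⟩ := hη
    rw [Metric.eventually_nhds_iff]
    refine ⟨min η (ε / 2), lt_min hη0 (by linarith), ?_⟩
    intro t ht
    have htd : |(t : ℝ) - (t₀ : ℝ)| < min η (ε / 2) := by
      rw [← Real.dist_eq, ← Subtype.dist_eq]; exact ht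
    have h1 : {x : X | t ≤ φ x} ⊆ O := by
      intro x hx
      apply hηO
      have h2 : (t : ℝ) ≤ (φ x : ℝ) := Subtype.coe_le_coe.2 hx
      have h3 : (t₀ : ℝ) - η < (t : ℝ) := by
        have := abs_lt.1 htd
        have h4 : min η (ε/2) ≤ η := min_le_left _ _
        linarith [this.1]
      show (t₀ : ℝ) - η ≤ (φ x : ℝ)
      linarith
    have h2 : nuc J {x : X | t ≤ φ x} ≤ b := (hOB _ h1).le
    have h3 : T.op (nuc J {x : X | t ≤ φ x}) t ≤ T.op b t := T.mono h2 (le_refl t)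
    have hmem : ((b, t) : I × I) ∈ Metric.ball ((v, t₀) : I × I) ε := by
      rw [Metric.mem_ball, Prod.dist_eq]
      apply max_lt
      · rw [Subtype.dist_eq]
        show |((b : ℝ)) - (v : ℝ)| < ε
        have h4 : m ≤ ε / 2 := min_le_left _ _
        have hb9 : (b : ℝ) = (v : ℝ) + m := rfl
        rw [hb9, show (v:ℝ) + m - (v:ℝ) = m by ring, abs_of_pos hm]
        linarith
      · rw [Subtype.dist_eq]
        have h5 := abs_lt.1 htd
        have h4 : min η (ε/2) ≤ ε/2 := min_le_right _ _
        show |(t:ℝ) - (t₀:ℝ)| < ε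
        rw [abs_lt]
        constructor <;> linarith [h5.1, h5.2]
    exact lt_of_le_of_lt h3 (hball _ hmem)

include hN hM hH in
lemma represents (φ : C(X, I)) :
    IsGreatest {y | ∃ t : I, y = T.op (nuc J {x | t ≤ φ x}) t} (J φ) := by
  have hub : ∀ y ∈ {y | ∃ t : I, y = T.op (nuc J {x | t ≤ φ x}) t}, y ≤ J φ := by
    rintro y ⟨t, rfl⟩; exact lower_bound hM hH φ t
  -- approximate maximizers
  have happrox : ∀ n : ℕ, ∃ t : I,
      (J φ : ℝ) ≤ (T.op (nuc J {x | t ≤ φ x}) t : ℝ) + 1 / (n + 1) := by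
    intro n
    obtain ⟨δ, hδ, hd⟩ := Metric.uniformContinuous_iff.1 T.uc (1 / (n + 1)) (by positivity)
    obtain ⟨N, hN2⟩ := exists_nat_gt (2 / δ)
    have hN0 : 0 < N := by
      by_contra h
      push_neg at h
      interval_cases N
      simp at hN2
      linarith [div_pos (by norm_num : (0:ℝ) < 2) hδ]
    obtain ⟨s, t, hst, hts, hJ⟩ := key_upper hN hM hH φ N hN0
    refine ⟨s, ?_⟩
    have hdist : dist ((nuc J {x | s ≤ φ x}, t) : I × I) ((nuc J {x | s ≤ φ x}, s) : I × I) < δ := by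
      rw [Prod.dist_eq]
      apply max_lt (by simpa using hδ)
      rw [Subtype.dist_eq, Real.dist_eq, abs_of_nonneg (by linarith)]
      have h2N : 2 / (N:ℝ) < δ := by
        rw [div_lt_iff₀ (by exact_mod_cast hN0)]
        rw [div_lt_iff₀ hδ] at hN2
        linarith [mul_comm δ (N:ℝ) ▸ hN2]
      linarith
    have hd2 := hd hdist
    rw [Subtype.dist_eq, Real.dist_eq] at hd2
    have h3 := abs_lt.1 hd2
    have h4 : (J φ : ℝ) ≤ (T.op (nuc J {x | s ≤ φ x}) t : ℝ) := Subtype.coe_le_coe.2 hJ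
    have h5 : (1:ℝ) / (n+1) > 0 := by positivity
    linarith [h3.2]
  choose ts hts using happrox
  obtain ⟨tstar, -, k, hk, hktend⟩ := IsCompact.tendsto_subseq (isCompact_univ (X := I))
    (fun n => Set.mem_univ (ts n))
  have hle : J φ ≤ T.op (nuc J {x | tstar ≤ φ x}) tstar := by
    by_contra hcon
    push_neg at hcon
    have hconR : (T.op (nuc J {x | tstar ≤ φ x}) tstar : ℝ) < (J φ : ℝ) :=
      Subtype.coe_lt_coe.2 hcon
    set y : I := ⟨((T.op (nuc J {x | tstar ≤ φ x}) tstar : ℝ) + (J φ : ℝ)) / 2,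
      ⟨by have := (T.op (nuc J {x | tstar ≤ φ x}) tstar).2.1; have := (J φ).2.1; linarith,
       by have := (T.op (nuc J {x | tstar ≤ φ x}) tstar).2.2; have := (J φ).2.2; linarith⟩⟩
      with hy'
    have hylt : T.op (nuc J {x | tstar ≤ φ x}) tstar < y := by
      apply Subtype.coe_lt_coe.1
      show (T.op (nuc J {x | tstar ≤ φ x}) tstar : ℝ) < ((T.op _ _ : ℝ) + (J φ : ℝ)) / 2
      linarith
    have hev := f_usc hM hH φ tstar y hylt
    have hev2 := hktend.eventually hev
    have hev3 : ∀ᶠ n in Filter.atTop, (1:ℝ) / (k n + 1) < (J φ : ℝ) - (y : ℝ) := by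
      have hyJ : (y : ℝ) < (J φ : ℝ) := by
        show ((T.op (nuc J {x | tstar ≤ φ x}) tstar : ℝ) + (J φ : ℝ)) / 2 < (J φ : ℝ)
        linarith
      have htend : Filter.Tendsto (fun n : ℕ => (1:ℝ) / (k n + 1)) Filter.atTop (nhds 0) := by
        apply Filter.Tendsto.comp tendsto_one_div_add_atTop_nhds_zero_nat
          (StrictMono.tendsto_atTop hk)
      exact htend.eventually_lt_const (by linarith)
    obtain ⟨n, hn1, hn2⟩ := (hev2.and hev3).exists
    have h6 : (J φ : ℝ) ≤ (T.op (nuc J {x | ts (k n) ≤ φ x}) (ts (k n)) : ℝ) +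
        (1:ℝ) / (((k n : ℕ) : ℝ) + 1) := hts (k n)
    have h9 : (1:ℝ) / (((k n : ℕ) : ℝ) + 1) < (J φ : ℝ) - (y : ℝ) := hn2
    have h7 : (T.op (nuc J {x | ts (k n) ≤ φ x}) (ts (k n)) : ℝ) < (y : ℝ) :=
      Subtype.coe_lt_coe.2 hn1
    have h10 : (J φ : ℝ) < (y : ℝ) + ((J φ : ℝ) - (y : ℝ)) :=
      lt_of_le_of_lt h6 (add_lt_add h7 h9)
    linarith only [h10]
  have hgef : T.op (nuc J {x | tstar ≤ φ x}) tstar ≤ J φ := lower_bound hM hH φ tstar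
  exact ⟨⟨tstar, (le_antisymm hle hgef).symm ▸ rfl⟩, hub⟩

end Rep

lemma Capacity.ext' {X : Type*} [TopologicalSpace X] {ν₁ ν₂ : Capacity X}
    (h : ν₁.ν = ν₂.ν) : ν₁ = ν₂ := by
  cases ν₁; cases ν₂; congr

section Forward
variable {X : Type*} [TopologicalSpace X] [CompactSpace X] [T2Space X]
  {T : Tnorm} {J : C(X, I) → I}

def nucCap (T : Tnorm) (J : C(X, I) → I) (hN : J (ContinuousMap.const X 1) = 1)
    (hM : ∀ φ ψ : C(X, I), Comonotone (⇑φ) (⇑ψ) → J (fSup φ ψ) = J φ ⊔ J ψ)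
    (hH : ∀ (c : I) (φ : C(X, I)), J (tMul T c φ) = T.op c (J φ)) : Capacity X where
  ν := fun F => nuc J F.1
  normed := by
    apply le_antisymm le_one'
    apply le_nuc
    intro u hu
    have h1 : u = ContinuousMap.const X 1 := ContinuousMap.ext fun x => hu x (Set.mem_univ x)
    rw [h1, hN]
  empty := by
    apply le_antisymm ?_ nonneg'
    have h1 : nuc J (∅ : Set X) ≤ J (ContinuousMap.const X 0) :=
      nuc_le fun x hx => absurd hx (Set.notMem_empty x)
    rwa [J_const hN hH 0] at h1
  mono := fun F G h => nuc_mono h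
  usc := by
    intro F a h
    obtain ⟨O, hO, hFO, hB⟩ := nuc_usc hM hH a h
    exact ⟨O, hO, hFO, fun B _ hBO => hB B.1 hBO⟩

variable (hN : J (ContinuousMap.const X 1) = 1)
  (hM : ∀ φ ψ : C(X, I), Comonotone (⇑φ) (⇑ψ) → J (fSup φ ψ) = J φ ⊔ J ψ)
  (hH : ∀ (c : I) (φ : C(X, I)), J (tMul T c φ) = T.op c (J φ))

lemma cap_unique (ν' : Capacity X)
    (hrep : ∀ φ : C(X, I), IsGreatest {y | ∃ t : I, y = T.op (ν'.ν (superLevel φ t)) t} (J φ)) :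
    ∀ F : {F : Set X // IsClosed F}, ν'.ν F = nuc J F.1 := by
  intro F
  apply le_antisymm
  · apply le_nuc
    intro u hu
    have h1 : T.op (ν'.ν (superLevel u 1)) 1 ≤ J u := (hrep u).2 ⟨1, rfl⟩
    rw [T.op_one] at h1
    refine le_trans (ν'.mono F (superLevel u 1) ?_) h1
    intro x hx
    show (1 : I) ≤ u x
    rw [hu x hx]
  · by_contra hlt
    rw [not_le] at hlt
    obtain ⟨O, hO, hFO, hB⟩ := ν'.usc F (nuc J F.1) hlt
    have hd : Disjoint Oᶜ F.1 := by
      rw [Set.disjoint_left]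
      intro x hx hxF
      exact hx (hFO hxF)
    obtain ⟨g, hg0, hg1, hg01⟩ :=
      exists_continuous_zero_one_of_isClosed hO.isClosed_compl F.2 hd
    set u : C(X, I) := ⟨fun x => ⟨g x, hg01 x⟩, Continuous.subtype_mk g.continuous _⟩ with hu'
    have hu : ∀ x ∈ F.1, u x = 1 := fun x hx => Subtype.ext (hg1 hx)
    have h2 : nuc J F.1 ≤ J u := nuc_le hu
    obtain ⟨t, ht⟩ := (hrep u).1
    have h3 : J u < nuc J F.1 := by
      rcases eq_or_lt_of_le (nonneg' : (0 : I) ≤ t) with h0 | h0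
      · rw [ht, ← h0, T.op_zero]
        exact lt_of_le_of_lt nonneg' hlt
      · have hsub : (superLevel u t).1 ⊆ O := by
          intro x hx
          by_contra hxO
          have h4 : g x = 0 := hg0 hxO
          have h5 : (t : ℝ) ≤ (u x : ℝ) := Subtype.coe_le_coe.2 hx
          have h6 : (u x : ℝ) = 0 := h4
          have h7 : (0 : ℝ) < (t : ℝ) := Subtype.coe_lt_coe.2 h0
          linarith
        have h8 : ν'.ν (superLevel u t) < nuc J F.1 :=
          hB _ ((superLevel u t).2.isCompact) hsub
        rw [ht]
        exact lt_of_le_of_lt (T.op_le_left _ _) h8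
    exact absurd (h2.trans_lt h3) (lt_irrefl _)

end Forward

section Backward
variable {X : Type*} [TopologicalSpace X] {T : Tnorm} {J : C(X, I) → I} {ν : Capacity X}
variable (hrep : ∀ φ : C(X, I), IsGreatest
    {y | ∃ t : I, y = T.op (ν.ν (superLevel φ t)) t} (J φ))

include hrep in
lemma back_N : J (ContinuousMap.const X 1) = 1 := by
  have h1 : (1 : I) ∈ {y | ∃ t : I, y = T.op (ν.ν (superLevel (ContinuousMap.const X 1) t)) t} := by
    refine ⟨1, ?_⟩
    have h2 : superLevel (ContinuousMap.const X 1) 1 = ⟨Set.univ, isClosed_univ⟩ := by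
      apply Subtype.ext
      ext x
      simp [superLevel]
    rw [h2, ν.normed, T.op_one]
  exact le_antisymm le_one' ((hrep _).2 h1)

include hrep in
lemma back_M (φ ψ : C(X, I)) (hc : Comonotone ⇑φ ⇑ψ) : J (fSup φ ψ) = J φ ⊔ J ψ := by
  have hsub1 : ∀ t : I, (superLevel φ t).1 ⊆ (superLevel (fSup φ ψ) t).1 := by
    intro t x hx
    show t ≤ φ x ⊔ ψ x
    exact le_trans hx le_sup_left
  have hsub2 : ∀ t : I, (superLevel ψ t).1 ⊆ (superLevel (fSup φ ψ) t).1 := by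
    intro t x hx
    show t ≤ φ x ⊔ ψ x
    exact le_trans hx le_sup_right
  have h1 : J φ ≤ J (fSup φ ψ) := by
    obtain ⟨t, ht⟩ := (hrep φ).1
    rw [ht]
    exact le_trans (T.mono (ν.mono _ _ (hsub1 t)) (le_refl t)) ((hrep (fSup φ ψ)).2 ⟨t, rfl⟩)
  have h2 : J ψ ≤ J (fSup φ ψ) := by
    obtain ⟨t, ht⟩ := (hrep ψ).1
    rw [ht]
    exact le_trans (T.mono (ν.mono _ _ (hsub2 t)) (le_refl t)) ((hrep (fSup φ ψ)).2 ⟨t, rfl⟩)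
  apply le_antisymm ?_ (sup_le h1 h2)
  obtain ⟨t, ht⟩ := (hrep (fSup φ ψ)).1
  rw [ht]
  have hcomp : {x | t ≤ φ x} ⊆ {x | t ≤ ψ x} ∨ {x | t ≤ ψ x} ⊆ {x | t ≤ φ x} := by
    by_cases h : {x | t ≤ φ x} ⊆ {x | t ≤ ψ x}
    · exact Or.inl h
    · right
      obtain ⟨x₀, hx1, hx2⟩ := Set.not_subset.1 h
      intro y hy
      have hp : (ψ x₀ : ℝ) < (t : ℝ) := Subtype.coe_lt_coe.2 (not_le.1 hx2)
      have hq : (t : ℝ) ≤ (ψ y : ℝ) := Subtype.coe_le_coe.2 hy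
      have hc1 := hc x₀ y
      have h4 : (φ x₀ : ℝ) ≤ (φ y : ℝ) := by nlinarith
      have h5 : (t : ℝ) ≤ (φ x₀ : ℝ) := Subtype.coe_le_coe.2 hx1
      show t ≤ φ y
      exact Subtype.coe_le_coe.1 (h5.trans h4)
  rcases hcomp with hAB | hBA
  · have he : superLevel (fSup φ ψ) t = superLevel ψ t := by
      apply Subtype.ext
      ext x
      simp only [superLevel, Set.mem_setOf_eq]
      constructor
      · intro hx
        rcases le_sup_iff.1 hx with h | h
        · exact hAB h
        · exact h
      · intro hx
        exact le_trans hx le_sup_right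
    rw [he]
    exact le_sup_of_le_right ((hrep ψ).2 ⟨t, rfl⟩)
  · have he : superLevel (fSup φ ψ) t = superLevel φ t := by
      apply Subtype.ext
      ext x
      simp only [superLevel, Set.mem_setOf_eq]
      constructor
      · intro hx
        rcases le_sup_iff.1 hx with h | h
        · exact h
        · exact hBA h
      · intro hx
        exact le_trans hx le_sup_left
    rw [he]
    exact le_sup_of_le_left ((hrep φ).2 ⟨t, rfl⟩)

include hrep in
lemma back_H [CompactSpace I] (c : I) (φ : C(X, I)) : J (tMul T c φ) = T.op c (J φ) := by
  apply le_antisymm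
  · obtain ⟨t, ht⟩ := (hrep (tMul T c φ)).1
    rw [ht]
    by_cases hne : ((superLevel (tMul T c φ) t).1).Nonempty
    · obtain ⟨x₀, hx₀⟩ := hne
      set K : Set I := {s : I | t ≤ T.op c s} with hK
      have hKc : IsClosed K := isClosed_le continuous_const (T.contL c)
      have hKne : K.Nonempty := ⟨φ x₀, hx₀⟩
      obtain ⟨s₀, hs₀K, hs₀lb⟩ := hKc.isCompact.exists_isLeast hKne
      have hsub : (superLevel (tMul T c φ) t).1 ⊆ (superLevel φ s₀).1 := by
        intro x hx
        exact hs₀lb (show φ x ∈ K from hx)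
      calc T.op (ν.ν (superLevel (tMul T c φ) t)) t
          ≤ T.op (ν.ν (superLevel φ s₀)) (T.op c s₀) := T.mono (ν.mono _ _ hsub) hs₀K
        _ = T.op c (T.op (ν.ν (superLevel φ s₀)) s₀) := by
            rw [← T.assoc, T.comm (ν.ν _) c, T.assoc]
        _ ≤ T.op c (J φ) := T.mono (le_refl c) ((hrep φ).2 ⟨s₀, rfl⟩)
    · have hsub : (superLevel (tMul T c φ) t).1 ⊆ (∅ : Set X) := by
        rw [Set.not_nonempty_iff_eq_empty.1 hne]
      have h0 : ν.ν (superLevel (tMul T c φ) t) ≤ 0 := by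
        have h9 := ν.mono _ ⟨∅, isClosed_empty⟩ hsub
        rwa [ν.empty] at h9
      have h0' : ν.ν (superLevel (tMul T c φ) t) = 0 := le_antisymm h0 nonneg'
      rw [h0', T.zero_op]
      exact nonneg'
  · obtain ⟨s, hs⟩ := (hrep φ).1
    rw [hs]
    have hsub : (superLevel φ s).1 ⊆ (superLevel (tMul T c φ) (T.op c s)).1 := fun x hx =>
      T.mono (le_refl c) hx
    calc T.op c (T.op (ν.ν (superLevel φ s)) s)
        = T.op (ν.ν (superLevel φ s)) (T.op c s) := by
          rw [← T.assoc, T.comm c, T.assoc]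
      _ ≤ T.op (ν.ν (superLevel (tMul T c φ) (T.op c s))) (T.op c s) :=
          T.mono (ν.mono _ _ hsub) (le_refl _)
      _ ≤ J (tMul T c φ) := (hrep _).2 ⟨T.op c s, rfl⟩

end Backward

/-- Characterization of t-normed integrals: a functional on `C(X,[0,1])` is normed,
comonotonically maxitive and `∗`-homogeneous iff it is the t-normed integral with respect
to a unique upper-semicontinuous capacity (monotonicity need not be assumed). -/
theorem tnormed_integral_characterization {X : Type*} [TopologicalSpace X] [CompactSpace X]
    [T2Space X] [Nonempty X] (T : Tnorm) (J : C(X, I) → I) :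
    (J (ContinuousMap.const X 1) = 1 ∧
     (∀ φ ψ : C(X, I), Comonotone (⇑φ) (⇑ψ) → J (fSup φ ψ) = J φ ⊔ J ψ) ∧
     (∀ (c : I) (φ : C(X, I)), J (tMul T c φ) = T.op c (J φ))) ↔
    (∃! ν : Capacity X, ∀ φ : C(X, I),
      IsGreatest {y | ∃ t : I, y = T.op (ν.ν (superLevel φ t)) t} (J φ)) := by
  constructor
  · rintro ⟨hN, hM, hH⟩
    refine ⟨nucCap T J hN hM hH, fun φ => represents hN hM hH φ, fun ν' hν' => ?_⟩
    exact Capacity.ext' (funext fun F => cap_unique ν' hν' F)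
  · rintro ⟨ν, hrep, -⟩
    exact ⟨back_N hrep, fun φ ψ hc => back_M hrep φ ψ hc, fun c φ => back_H hrep c φ⟩
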